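/- Let p, q be positive integers, Σ and Σ̂ real p×p matrices, H a real q×p matrix, and R, R̂ real q×q matrices such that H Σ Hᵀ + R and H Σ̂ Hᵀ + R̂ are invertible. Set K = Σ Hᵀ (H Σ Hᵀ + R)⁻¹ and K̂ = Σ̂ Hᵀ (H Σ̂ Hᵀ + R̂)⁻¹. Then ‖K̂ − K‖ ≤ ( ‖I − K H‖ · ‖Σ̂ − Σ‖ · ‖H‖ + ‖K‖ · ‖R − R̂‖ ) · ‖(H Σ̂ Hᵀ + R̂)⁻¹‖. -/

import Mathlib

open Matrix
open scoped Matrix.Norms.L2Operator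

/-- **first bound of Corollary 1.** For Kalman gains
`K = Σ Hᵀ (H Σ Hᵀ + R)⁻¹` and `K̂ = Σ̂ Hᵀ (H Σ̂ Hᵀ + R̂)⁻¹` (with both
`H Σ Hᵀ + R` and `H Σ̂ Hᵀ + R̂` invertible),
`‖K̂ − K‖ ≤ (‖I − K H‖ ‖Σ̂ − Σ‖ ‖H‖ + ‖K‖ ‖R − R̂‖) ‖(H Σ̂ Hᵀ + R̂)⁻¹‖`
in the spectral norm. -/
theorem kalman_gain_error_bound_estimated_R (p q : ℕ) (hp : 0 < p) (hq : 0 < q)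
    (S Shat : Matrix (Fin p) (Fin p) ℝ) (H : Matrix (Fin q) (Fin p) ℝ)
    (R Rhat : Matrix (Fin q) (Fin q) ℝ)
    (h1 : IsUnit (H * S * Hᵀ + R).det) (h2 : IsUnit (H * Shat * Hᵀ + Rhat).det) :
    ‖Shat * Hᵀ * (H * Shat * Hᵀ + Rhat)⁻¹ - S * Hᵀ * (H * S * Hᵀ + R)⁻¹‖ ≤
      (‖(1 : Matrix (Fin p) (Fin p) ℝ) - S * Hᵀ * (H * S * Hᵀ + R)⁻¹ * H‖ * ‖Shat - S‖ * ‖H‖ +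
          ‖S * Hᵀ * (H * S * Hᵀ + R)⁻¹‖ * ‖R - Rhat‖) *
        ‖(H * Shat * Hᵀ + Rhat)⁻¹‖ := by
  set B := H * S * Hᵀ + R with hBdef
  set A := H * Shat * Hᵀ + Rhat with hAdef
  set K := S * Hᵀ * B⁻¹ with hKdef
  have hB : B⁻¹ * B = 1 := Matrix.nonsing_inv_mul _ h1
  have hA : A * A⁻¹ = 1 := Matrix.mul_nonsing_inv _ h2
  have hK : K * B = S * Hᵀ := by
    rw [hKdef, Matrix.mul_assoc, hB, Matrix.mul_one]
  have h3 : Shat * Hᵀ - K * A =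
      (1 - K * H) * (Shat - S) * Hᵀ + K * (R - Rhat) - (K * B - S * Hᵀ) := by
    simp only [hAdef, hBdef, Matrix.sub_mul, Matrix.mul_sub, Matrix.add_mul, Matrix.mul_add,
        Matrix.one_mul, Matrix.mul_assoc]
    abel
  rw [hK, sub_self, sub_zero] at h3
  have key : Shat * Hᵀ * A⁻¹ - K =
      ((1 - K * H) * (Shat - S) * Hᵀ + K * (R - Rhat)) * A⁻¹ := by
    rw [← h3, Matrix.sub_mul, Matrix.mul_assoc K, hA, Matrix.mul_one]
  rw [key]
  have hHT : ‖Hᵀ‖ = ‖H‖ := by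
    have := Matrix.l2_opNorm_conjTranspose H
    simpa [Matrix.conjTranspose_eq_transpose_of_trivial] using this
  calc ‖((1 - K * H) * (Shat - S) * Hᵀ + K * (R - Rhat)) * A⁻¹‖
      ≤ ‖(1 - K * H) * (Shat - S) * Hᵀ + K * (R - Rhat)‖ * ‖A⁻¹‖ :=
        Matrix.l2_opNorm_mul _ _
    _ ≤ (‖(1 - K * H) * (Shat - S) * Hᵀ‖ + ‖K * (R - Rhat)‖) * ‖A⁻¹‖ := by
        gcongr; exact norm_add_le _ _
    _ ≤ (‖1 - K * H‖ * ‖Shat - S‖ * ‖H‖ + ‖K‖ * ‖R - Rhat‖) * ‖A⁻¹‖ := by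
        gcongr ?_ * _
        refine add_le_add ?_ (Matrix.l2_opNorm_mul _ _)
        calc ‖(1 - K * H) * (Shat - S) * Hᵀ‖
            ≤ ‖(1 - K * H) * (Shat - S)‖ * ‖Hᵀ‖ := Matrix.l2_opNorm_mul _ _
          _ ≤ ‖1 - K * H‖ * ‖Shat - S‖ * ‖H‖ := by
              rw [hHT]; gcongr; exact Matrix.l2_opNorm_mul _ _
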